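/- Let p, k ≥ 1 be integers and let V′ be a real p×k matrix all of whose entries lie in {−1, 1}. Then there exists a real p×k matrix V all of whose entries lie in {0, 1}, whose first row is the all-ones row, such that det(V Vᵀ) = det(V′ (V′)ᵀ) / 2^{2(p−1)}. -/

import Mathlib

open Matrix BigOperators

/-- The {−1,1} → {0,1} transformation: any ±1 matrix V′ can be transformed into a
0/1 matrix V with all-ones first row whose Gram determinant is smaller by exactly
the factor 2^(2(p−1)). -/
theorem pm_one_to_zero_one_transform
    (p k : ℕ) (hp : 1 ≤ p) (hk : 1 ≤ k)
    (V' : Matrix (Fin p) (Fin k) ℝ) (hV' : ∀ i j, V' i j = -1 ∨ V' i j = 1) :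
    ∃ V : Matrix (Fin p) (Fin k) ℝ,
      (∀ i j, V i j = 0 ∨ V i j = 1) ∧
      (∀ j, V ⟨0, hp⟩ j = 1) ∧
      (V * Vᵀ).det = (V' * V'ᵀ).det / 2 ^ (2 * (p - 1)) := by
  set z : Fin p := ⟨0, hp⟩ with hz
  -- W: flip column signs so the first row is all ones
  set W : Matrix (Fin p) (Fin k) ℝ := fun i j => V' i j * V' z j with hW
  have hW1 : ∀ i j, W i j = -1 ∨ W i j = 1 := by
    intro i j
    rcases hV' i j with h | h <;> rcases hV' z j with h' | h' <;>
      simp [hW, h, h']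
  have hWz : ∀ j, W z j = 1 := by
    intro j
    rcases hV' z j with h | h <;> simp [hW, h] <;> norm_num
  have hWW : W * Wᵀ = V' * V'ᵀ := by
    ext i i'
    simp only [Matrix.mul_apply, Matrix.transpose_apply]; simp only [hW]
    apply Finset.sum_congr rfl
    intro j _
    rcases hV' z j with h | h <;> rw [h] <;> ring
  -- the row-operation matrix A
  set A : Matrix (Fin p) (Fin p) ℝ :=
    fun i l => if i = z then (if l = z then 1 else 0)
      else ((if l = z then (1:ℝ)/2 else 0) + (if l = i then (1:ℝ)/2 else 0)) with hA
  have hzle : ∀ i : Fin p, z ≤ i := by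
    intro i; exact Fin.mk_le_of_le_val (Nat.zero_le _)
  have hAtri : ∀ i l : Fin p, i < l → A i l = 0 := by
    intro i l hil
    have h1 : l ≠ z := by
      intro h; subst h; exact absurd (hzle i) (not_le.mpr hil)
    have h2 : l ≠ i := (ne_of_gt hil)
    by_cases hi : i = z <;> simp [hA, hi, h1, h2]
  have hdetA : A.det = (1/2 : ℝ) ^ (p - 1) := by
    rw [Matrix.det_of_lowerTriangular A hAtri]
    have : ∀ i : Fin p, A i i = if i = z then 1 else (1/2 : ℝ) := by
      intro i
      by_cases hi : i = z <;> simp [hA, hi]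
    rw [Finset.prod_congr rfl (fun i _ => this i)]
    rw [← Finset.mul_prod_erase _ _ (Finset.mem_univ z), if_pos rfl, one_mul]
    rw [Finset.prod_congr rfl (fun i hi => if_neg (Finset.ne_of_mem_erase hi))]
    rw [Finset.prod_const, Finset.card_erase_of_mem (Finset.mem_univ z),
      Finset.card_univ, Fintype.card_fin]
  have hentry : ∀ i j, i ≠ z → (A * W) i j = (1 + W i j) / 2 := by
    intro i j hi
    rw [Matrix.mul_apply]
    simp only [hA, if_neg hi, add_mul, ite_mul, zero_mul,
      Finset.sum_add_distrib, Finset.sum_ite_eq', Finset.mem_univ, if_pos]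
    rw [hWz j]; ring
  have hentryz : ∀ j, (A * W) z j = 1 := by
    intro j
    rw [Matrix.mul_apply]
    simp only [hA, if_pos rfl, ite_mul, zero_mul, one_mul,
      Finset.sum_ite_eq', Finset.mem_univ, if_pos]
    exact hWz j
  refine ⟨A * W, ?_, ?_, ?_⟩
  · intro i j
    by_cases hi : i = z
    · right; rw [hi]; exact hentryz j
    · rw [hentry i j hi]
      rcases hW1 i j with h | h
      · left; rw [h]; ring
      · right; rw [h]; ring
  · intro j; exact hentryz j
  · have : (A * W) * (A * W)ᵀ = A * (W * Wᵀ) * Aᵀ := by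
      rw [Matrix.transpose_mul]; simp [Matrix.mul_assoc]
    rw [this, Matrix.det_mul, Matrix.det_mul, Matrix.det_transpose, hWW, hdetA]
    have h2 : (2:ℝ) ^ (2 * (p-1)) = 2 ^ (p-1) * 2 ^ (p-1) := by
      rw [two_mul, pow_add]
    rw [h2]
    have hne : (2:ℝ) ^ (p-1) ≠ 0 := by positivity
    field_simp
    have key : (1/2:ℝ)^(p-1) * 2^(p-1) = 1 := by rw [← mul_pow]; norm_num
    linear_combination ((V' * V'ᵀ).det * ((1/2:ℝ)^(p-1) * 2^(p-1) + 1)) * key
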